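/- arXiv:2503.11642 — 2 statements merged into one kernel-verified Lean document; each statement's English description precedes it below -/
import Mathlib

section
/- For all real numbers δ, t with 0 < δ < t, one has t^{1/2} ∫_{δ/2}^δ s^{−1}(t−s)^{−1/2} ds ≤ ln(3 + 2√2). -/
open MeasureTheory Real Set

/-- For `0 < δ < t`, `t^{1/2} ∫_{δ/2}^δ s⁻¹ (t-s)^{-1/2} ds ≤ ln(3+2√2)`. -/
theorem I1_bound (δ t : ℝ) (hδ : 0 < δ) (hδt : δ < t) :
    Real.sqrt t * ∫ s in Set.Ioo (δ/2) δ, s⁻¹ * (t - s) ^ (-(1:ℝ)/2) ≤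
      Real.log (3 + 2 * Real.sqrt 2) := by
  have ht : 0 < t := hδ.trans hδt
  set A := Real.sqrt t with hAdef
  have hA : 0 < A := Real.sqrt_pos.mpr ht
  have hA2 : A ^ 2 = t := Real.sq_sqrt ht.le
  have hle : δ / 2 ≤ δ := by linarith
  set G : ℝ → ℝ := fun s => Real.log (A - Real.sqrt (t - s)) - Real.log (A + Real.sqrt (t - s))
    with hGdef
  -- derivative of G
  have hderiv : ∀ s ∈ Set.Icc (δ/2) δ,
      HasDerivAt G (A * (s⁻¹ * (t - s) ^ (-(1:ℝ)/2))) s := by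
    intro s hs
    have hs0 : 0 < s := lt_of_lt_of_le (by linarith) hs.1
    have hst : s < t := lt_of_le_of_lt hs.2 hδt
    have hts : 0 < t - s := by linarith
    set u := Real.sqrt (t - s) with hudef
    have hu : 0 < u := Real.sqrt_pos.mpr hts
    have hu2 : u ^ 2 = t - s := Real.sq_sqrt hts.le
    have huA : u < A := by
      apply Real.sqrt_lt_sqrt hts.le; linarith
    have h1 : HasDerivAt (fun x : ℝ => Real.sqrt (t - x)) (-(1 / (2 * u))) s := by
      have h0 : HasDerivAt (fun x : ℝ => t - x) (-1) s := by
        simpa using (hasDerivAt_id' s).const_sub t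
      have := (Real.hasDerivAt_sqrt (ne_of_gt hts)).comp s h0
      simpa [hudef, Function.comp_def] using this
    have h2 : HasDerivAt (fun x : ℝ => A - Real.sqrt (t - x)) (1 / (2 * u)) s := by
      simpa using h1.const_sub A
    have h3 : HasDerivAt (fun x : ℝ => A + Real.sqrt (t - x)) (-(1 / (2 * u))) s := by
      exact h1.const_add A
    have h4 : HasDerivAt (fun x : ℝ => Real.log (A - Real.sqrt (t - x)))
        ((1 / (2 * u)) / (A - u)) s := by
      exact h2.log (ne_of_gt (by linarith))
    have h5 : HasDerivAt (fun x : ℝ => Real.log (A + Real.sqrt (t - x)))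
        ((-(1 / (2 * u))) / (A + u)) s := by
      exact h3.log (by positivity)
    have h6 := h4.sub h5
    have heq : (1 / (2 * u)) / (A - u) - (-(1 / (2 * u))) / (A + u)
        = A * (s⁻¹ * (t - s) ^ (-(1:ℝ)/2)) := by
      have hrpow : (t - s) ^ (-(1:ℝ)/2) = u⁻¹ := by
        rw [show (-(1:ℝ)/2) = -(1/2) by ring, Real.rpow_neg hts.le,
          ← Real.sqrt_eq_rpow]
      rw [hrpow]
      have hAu : A - u ≠ 0 := ne_of_gt (by linarith)
      have hAu' : A + u ≠ 0 := by positivity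
      field_simp
      linear_combination 2*A*hu2 - 2*A*hA2
    rw [heq] at h6
    exact h6
  -- integrability of the derivative
  have hcont : ContinuousOn (fun s : ℝ => A * (s⁻¹ * (t - s) ^ (-(1:ℝ)/2)))
      (Set.Icc (δ/2) δ) := by
    apply ContinuousOn.mul continuousOn_const
    apply ContinuousOn.mul
    · exact ContinuousOn.inv₀ continuousOn_id fun x hx => by
        have : 0 < x := lt_of_lt_of_le (by linarith) hx.1
        exact ne_of_gt this
    · apply ContinuousOn.rpow_const
      · exact (continuousOn_const.sub continuousOn_id)
      · intro x hx
        left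
        have : x < t := lt_of_le_of_lt hx.2 hδt
        have : 0 < t - x := by linarith
        exact ne_of_gt this
  have hint : IntervalIntegrable (fun s : ℝ => A * (s⁻¹ * (t - s) ^ (-(1:ℝ)/2)))
      volume (δ/2) δ := by
    apply ContinuousOn.intervalIntegrable
    rwa [Set.uIcc_of_le hle]
  -- FTC
  have hftc : (∫ s in (δ/2)..δ, A * (s⁻¹ * (t - s) ^ (-(1:ℝ)/2))) = G δ - G (δ/2) := by
    apply intervalIntegral.integral_eq_sub_of_hasDerivAt
    · intro s hs
      exact hderiv s (by rwa [Set.uIcc_of_le hle] at hs)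
    · exact hint
  -- rewrite the set integral as interval integral
  have e1 : Real.sqrt t * ∫ s in Set.Ioo (δ/2) δ, s⁻¹ * (t - s) ^ (-(1:ℝ)/2)
      = ∫ s in (δ/2)..δ, A * (s⁻¹ * (t - s) ^ (-(1:ℝ)/2)) := by
    rw [intervalIntegral.integral_const_mul, intervalIntegral.integral_of_le hle,
      MeasureTheory.integral_Ioc_eq_integral_Ioo, hAdef]
  rw [e1, hftc]
  -- the algebraic inequality
  set a := Real.sqrt (t - δ) with hadef
  set b := Real.sqrt (t - δ/2) with hbdef
  have ha0 : 0 < a := Real.sqrt_pos.mpr (by linarith)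
  have hb0 : 0 < b := Real.sqrt_pos.mpr (by linarith)
  have ha2 : a ^ 2 = t - δ := Real.sq_sqrt (by linarith)
  have hb2 : b ^ 2 = t - δ/2 := Real.sq_sqrt (by linarith)
  have haA : a < A := Real.sqrt_lt_sqrt (by linarith) (by linarith)
  have hbA : b < A := Real.sqrt_lt_sqrt (by linarith) (by linarith)
  have hs2 : Real.sqrt 2 ^ 2 = 2 := Real.sq_sqrt (by norm_num)
  have hs0 : (0:ℝ) < Real.sqrt 2 := Real.sqrt_pos.mpr (by norm_num)
  set c := Real.sqrt 2 with hcdef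
  -- key quadratic inequality : 2(A+b)^2 ≤ (3+2√2)(A+a)^2
  have key : 2 * (A + b) ^ 2 ≤ (3 + 2 * c) * (A + a) ^ 2 := by
    nlinarith [sq_nonneg (c * A - 2 * b), sq_nonneg a, mul_nonneg hA.le ha0.le,
      mul_pos hA ha0, mul_pos hs0 (mul_pos hA ha0), sq_nonneg (A - b)]
  -- product inequality
  have hP : 0 < (A + a) * (A + b) := by positivity
  have hprod : (A - a) * (A + b) ≤ (3 + 2 * c) * ((A + a) * (A - b)) := by
    apply le_of_mul_le_mul_right _ hP
    have hL : (A - a) * (A + b) * ((A + a) * (A + b)) = δ * (A + b) ^ 2 := by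
      have h : A ^ 2 - a ^ 2 = δ := by rw [hA2, ha2]; ring
      linear_combination (A+b)^2 * h
    have hR : (3 + 2 * c) * ((A + a) * (A - b)) * ((A + a) * (A + b))
        = (3 + 2 * c) * (δ/2) * (A + a) ^ 2 := by
      have h : A ^ 2 - b ^ 2 = δ/2 := by rw [hA2, hb2]; ring
      linear_combination (3+2*c)*(A+a)^2 * h
    rw [hL, hR]
    calc δ * (A + b) ^ 2 = δ/2 * (2 * (A + b) ^ 2) := by ring
      _ ≤ δ/2 * ((3 + 2 * c) * (A + a) ^ 2) :=
          mul_le_mul_of_nonneg_left key (by linarith : (0:ℝ) ≤ δ/2)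
      _ = (3 + 2 * c) * (δ/2) * (A + a) ^ 2 := by ring
  -- finish with logs
  have hpos1 : 0 < A - a := by linarith
  have hpos2 : 0 < A + a := by linarith
  have hpos3 : 0 < A - b := by linarith
  have hpos4 : 0 < A + b := by linarith
  have hpos5 : 0 < 3 + 2 * c := by linarith
  have hlog := Real.log_le_log (by positivity) hprod
  rw [Real.log_mul (ne_of_gt hpos1) (ne_of_gt hpos4),
    Real.log_mul (ne_of_gt hpos5) (by positivity),
    Real.log_mul (ne_of_gt hpos2) (ne_of_gt hpos3)] at hlog
  have hG1 : G δ = Real.log (A - a) - Real.log (A + a) := rfl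
  have hG2 : G (δ/2) = Real.log (A - b) - Real.log (A + b) := rfl
  rw [hG1, hG2]
  linarith [hlog]
end

section
/- There exists a constant c > 0 such that for every integer q ≥ 0, ∫₀^{1/8} ( sin(2^{q+3} x) · sin(x)/x )² dx ≥ c. Consequently, for all integers q₀, q₁ with 0 ≤ q₀ ≤ q₁, Σ_{q=q₀}^{q₁} ∫₀^{1/8} ( sin(8·2^{q} x) · sin(x)/x )² dx ≥ c (q₁ − q₀ + 1). -/
open MeasureTheory Real Set

lemma sinsq_integral (N : ℝ) (hN : 8 ≤ N) :
    (1/32 : ℝ) ≤ ∫ x in Set.Ioo (0:ℝ) (1/8), Real.sin (N * x) ^ 2 := by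
  have hN0 : (0:ℝ) < N := by linarith
  have hNe : N ≠ 0 := ne_of_gt hN0
  have h1 : (∫ x in Set.Ioo (0:ℝ) (1/8), Real.sin (N * x) ^ 2)
      = ∫ x in (0:ℝ)..(1/8), Real.sin (N * x) ^ 2 := by
    rw [intervalIntegral.integral_of_le (by norm_num), integral_Ioc_eq_integral_Ioo]
  have h2 : (∫ x in (0:ℝ)..(1/8), Real.sin (N * x) ^ 2)
      = N⁻¹ * ∫ u in (N*0)..(N*(1/8)), Real.sin u ^ 2 := by
    rw [intervalIntegral.integral_comp_mul_left (fun u => Real.sin u ^ 2) hNe]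
    simp [smul_eq_mul]
  have h3 : (∫ u in (N*0)..(N*(1/8)), Real.sin u ^ 2)
      = (Real.sin (N*0) * Real.cos (N*0) - Real.sin (N*(1/8)) * Real.cos (N*(1/8))
          + N*(1/8) - N*0) / 2 := integral_sin_sq
  have hb : |Real.sin (N*(1/8)) * Real.cos (N*(1/8))| ≤ 1/2 := by
    have h4 : Real.sin (N*(1/8)) * Real.cos (N*(1/8)) = Real.sin (2*(N*(1/8))) / 2 := by
      rw [Real.sin_two_mul]; ring
    rw [h4, abs_div]
    have := Real.abs_sin_le_one (2*(N*(1/8)))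
    rw [abs_of_pos (by norm_num : (0:ℝ) < 2)]
    linarith
  rw [h1, h2, h3]
  have habs := abs_le.mp hb
  have hNinv : N⁻¹ ≤ 1/8 := by
    rw [inv_le_comm₀ hN0 (by norm_num)]; linarith
  have hNinvpos : 0 < N⁻¹ := inv_pos.mpr hN0
  simp only [mul_zero, Real.sin_zero, Real.cos_zero, zero_mul, mul_one]
  have hNN : N⁻¹ * (N * (1/8)) = 1/8 := by field_simp
  nlinarith [habs.1, habs.2]

lemma key_lemma (N : ℝ) (hN : 8 ≤ N) :
    (1/128 : ℝ) ≤ ∫ x in Set.Ioo (0:ℝ) (1/8),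
      (Real.sin (N * x) * (Real.sin x / x)) ^ 2 := by
  have hmeas : MeasurableSet (Set.Ioo (0:ℝ) (1/8)) := measurableSet_Ioo
  have hvol : volume (Set.Ioo (0:ℝ) (1/8)) ≠ ⊤ := by simp [Real.volume_Ioo]
  have hbound : ∀ x ∈ Set.Ioo (0:ℝ) (1/8),
      (Real.sin (N * x) * (Real.sin x / x)) ^ 2 ≤ 1 := by
    intro x hx
    have hx0 : 0 < x := hx.1
    have hs1 : Real.sin x < x := Real.sin_lt hx0
    have hs0 : 0 ≤ Real.sin x :=
      Real.sin_nonneg_of_nonneg_of_le_pi (le_of_lt hx0)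
        (by linarith [hx.2, Real.pi_gt_three])
    have hd1 : Real.sin x / x ≤ 1 := by rw [div_le_one hx0]; linarith
    have hd0 : 0 ≤ Real.sin x / x := div_nonneg hs0 (le_of_lt hx0)
    have hsq := Real.sin_sq_le_one (N * x)
    have hd2 : (Real.sin x / x) ^ 2 ≤ 1 := by nlinarith
    have heq : (Real.sin (N*x) * (Real.sin x / x)) ^ 2
        = Real.sin (N*x) ^ 2 * (Real.sin x / x) ^ 2 := by ring
    rw [heq]
    nlinarith [sq_nonneg (Real.sin (N*x)), sq_nonneg (Real.sin x / x)]
  have hfi : IntegrableOn (fun x => (Real.sin (N * x) * (Real.sin x / x)) ^ 2)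
      (Set.Ioo (0:ℝ) (1/8)) := by
    apply Measure.integrableOn_of_bounded hvol
    · apply Measurable.aestronglyMeasurable; fun_prop
    · filter_upwards [ae_restrict_mem hmeas] with x hx
      rw [Real.norm_eq_abs, abs_of_nonneg (sq_nonneg _)]
      exact hbound x hx
  have hgi : IntegrableOn (fun x => (1/4 : ℝ) * Real.sin (N * x) ^ 2)
      (Set.Ioo (0:ℝ) (1/8)) := by
    apply Measure.integrableOn_of_bounded hvol (M := 1/4)
    · apply Measurable.aestronglyMeasurable; fun_prop
    · filter_upwards with x
      rw [Real.norm_eq_abs, abs_of_nonneg (by positivity)]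
      nlinarith [Real.sin_sq_le_one (N*x), sq_nonneg (Real.sin (N*x))]
  have hmono : ∀ x ∈ Set.Ioo (0:ℝ) (1/8),
      (1/4 : ℝ) * Real.sin (N * x) ^ 2
        ≤ (Real.sin (N * x) * (Real.sin x / x)) ^ 2 := by
    intro x hx
    have hx0 : 0 < x := hx.1
    have hx1 : x ≤ 1 := by linarith [hx.2]
    have hs := Real.sin_gt_sub_cube hx0
    have hx2 : x ^ 2 ≤ 1 := by nlinarith
    have hxx : x ^ 3 / 4 ≤ x / 2 := by nlinarith
    have hdiv : (1/2 : ℝ) ≤ Real.sin x / x := by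
      rw [le_div_iff₀ hx0]; linarith [pow_pos hx0 3]
    have heq : (Real.sin (N*x) * (Real.sin x / x)) ^ 2
        = Real.sin (N*x) ^ 2 * (Real.sin x / x) ^ 2 := by ring
    rw [heq]
    nlinarith [sq_nonneg (Real.sin (N*x)), sq_nonneg (Real.sin x / x - 1/2)]
  have hle := setIntegral_mono_on hgi hfi hmeas hmono
  rw [MeasureTheory.integral_const_mul] at hle
  have := sinsq_integral N hN
  linarith

/-- There is `c > 0` with `∫₀^{1/8} (sin(2^{q+3}x) sin(x)/x)² dx ≥ c` for every
integer `q ≥ 0`; consequently the sum over `q₀ ≤ q ≤ q₁` is at least `c (q₁ - q₀ + 1)`. -/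
theorem sin_lower_bound :
    ∃ c > (0:ℝ),
      (∀ q : ℕ,
        c ≤ ∫ x in Set.Ioo (0:ℝ) (1/8),
          (Real.sin (2 ^ (q + 3) * x) * (Real.sin x / x)) ^ 2) ∧
      ∀ q₀ q₁ : ℕ, q₀ ≤ q₁ →
        c * ((q₁ : ℝ) - (q₀ : ℝ) + 1) ≤
          ∑ q ∈ Finset.Icc q₀ q₁,
            ∫ x in Set.Ioo (0:ℝ) (1/8),
              (Real.sin (8 * 2 ^ q * x) * (Real.sin x / x)) ^ 2 := by
  refine ⟨1/128, by norm_num, ?_, ?_⟩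
  · intro q
    have h8 : (8:ℝ) ≤ 2 ^ (q + 3) := by
      calc (8:ℝ) = 2 ^ 3 := by norm_num
      _ ≤ 2 ^ (q + 3) := by
          apply pow_le_pow_right₀ (by norm_num) (by omega)
    exact key_lemma _ h8
  · intro q₀ q₁ hq
    have hterm : ∀ q ∈ Finset.Icc q₀ q₁, (1/128 : ℝ) ≤
        ∫ x in Set.Ioo (0:ℝ) (1/8),
          (Real.sin (8 * 2 ^ q * x) * (Real.sin x / x)) ^ 2 := by
      intro q _
      have h8 : (8:ℝ) ≤ 8 * 2 ^ q := by
        nlinarith [one_le_pow₀ (by norm_num : (1:ℝ) ≤ 2) (n := q)]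
      exact key_lemma _ h8
    have hcard : (Finset.Icc q₀ q₁).card = q₁ - q₀ + 1 := by
      rw [Nat.card_Icc]; omega
    have hsum := Finset.card_nsmul_le_sum (Finset.Icc q₀ q₁)
      (fun q => ∫ x in Set.Ioo (0:ℝ) (1/8),
        (Real.sin (8 * 2 ^ q * x) * (Real.sin x / x)) ^ 2) (1/128 : ℝ) hterm
    rw [hcard] at hsum
    have hc : ((q₁ - q₀ + 1 : ℕ) : ℝ) = (q₁ : ℝ) - (q₀ : ℝ) + 1 := by
      push_cast [Nat.cast_sub hq]; ring
    rw [nsmul_eq_mul, hc] at hsum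
    linarith
end
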